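/- Let p, q, r be probability distributions on Fin 2 with q 0 > 0 and q 1 > 0. If p 0 * r 0 / q 0 + p 1 * r 1 / q 1 = 1, then either (q 0 = p 0 and q 1 = p 1) or (q 0 = r 0 and q 1 = r 1). -/
import Mathlib


/-- Two-dimensional case of the supplement lemma. -/
theorem three_distributions_sum_one_dim_two
    (p q r : Fin 2 → ℝ)
    (hp0 : ∀ i, 0 ≤ p i) (hp1 : p 0 + p 1 = 1)
    (hq0 : ∀ i, 0 ≤ q i) (hq1 : q 0 + q 1 = 1)
    (hr0 : ∀ i, 0 ≤ r i) (hr1 : r 0 + r 1 = 1)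
    (hq0pos : 0 < q 0) (hq1pos : 0 < q 1)
    (hsum : p 0 * r 0 / q 0 + p 1 * r 1 / q 1 = 1) :
    (q 0 = p 0 ∧ q 1 = p 1) ∨ (q 0 = r 0 ∧ q 1 = r 1) := by
  have h : p 0 * r 0 * q 1 + p 1 * r 1 * q 0 = q 0 * q 1 := by
    field_simp at hsum; linarith
  have ep : p 1 = 1 - p 0 := by linarith
  have eq' : q 1 = 1 - q 0 := by linarith
  have er : r 1 = 1 - r 0 := by linarith
  rw [ep, eq', er] at h
  have key : (r 0 - q 0) * (p 0 - q 0) = 0 := by linear_combination h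
  rcases mul_eq_zero.mp key with h1 | h1
  · right
    have : q 0 = r 0 := by linarith
    exact ⟨this, by linarith⟩
  · left
    have : q 0 = p 0 := by linarith
    exact ⟨this, by linarith⟩
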